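/- For every real number x with 0 < |x| < π, one has ((π² − x²)/π²)^(π²/6) ≤ 3·((sin x)/x³ − (cos x)/x²). -/

import Mathlib

open Real Set

private lemma nonneg_aux (f f' : ℝ → ℝ) (hf : ∀ x, HasDerivAt f (f' x) x)
    (h0 : f 0 = 0) (hd : ∀ x, 0 ≤ x → 0 ≤ f' x) :
    ∀ x, 0 ≤ x → 0 ≤ f x := by
  intro x hx
  have hmono : MonotoneOn f (Ici (0:ℝ)) :=
    monotoneOn_of_deriv_nonneg (convex_Ici 0)
      (fun y _ => (hf y).continuousAt.continuousWithinAt)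
      (fun y _ => (hf y).differentiableAt.differentiableWithinAt)
      (fun y hy => by
        rw [(hf y).deriv]
        exact hd y (le_of_lt (by simpa using hy)))
  have := hmono self_mem_Ici (mem_Ici.mpr hx) hx
  simpa [h0] using this

private lemma step2 : ∀ x : ℝ, 0 ≤ x → 0 ≤ x - Real.sin x := by
  refine nonneg_aux _ (fun y => 1 - Real.cos y) (fun y => ?_) (by simp) ?_
  · exact (hasDerivAt_id y).sub (Real.hasDerivAt_sin y)
  · intro y _; nlinarith [Real.cos_le_one y]

private lemma step3 : ∀ x : ℝ, 0 ≤ x → 0 ≤ Real.cos x - 1 + x ^ 2 / 2 := by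
  refine nonneg_aux _ (fun y => y - Real.sin y) (fun y => ?_) (by norm_num) step2
  have h := ((Real.hasDerivAt_cos y).sub_const 1).add ((hasDerivAt_pow 2 y).div_const 2)
  refine h.congr_deriv ?_; push_cast; ring

private lemma step4 : ∀ x : ℝ, 0 ≤ x → 0 ≤ Real.sin x - x + x ^ 3 / 6 := by
  refine nonneg_aux _ (fun y => Real.cos y - 1 + y ^ 2 / 2) (fun y => ?_) (by norm_num) step3
  have h := (((Real.hasDerivAt_sin y).sub (hasDerivAt_id y)).add
    ((hasDerivAt_pow 3 y).div_const 6))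
  refine h.congr_deriv ?_; push_cast; ring

private lemma step5 : ∀ x : ℝ, 0 ≤ x → 0 ≤ 1 - x ^ 2 / 2 + x ^ 4 / 24 - Real.cos x := by
  refine nonneg_aux _ (fun y => Real.sin y - y + y ^ 3 / 6) (fun y => ?_) (by norm_num) step4
  have h := (((hasDerivAt_const y (1:ℝ)).sub ((hasDerivAt_pow 2 y).div_const 2)).add
    ((hasDerivAt_pow 4 y).div_const 24)).sub (Real.hasDerivAt_cos y)
  refine h.congr_deriv ?_; push_cast; ring

private lemma step6 : ∀ x : ℝ, 0 ≤ x → 0 ≤ x - x ^ 3 / 6 + x ^ 5 / 120 - Real.sin x := by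
  refine nonneg_aux _ (fun y => 1 - y ^ 2 / 2 + y ^ 4 / 24 - Real.cos y) (fun y => ?_)
    (by norm_num) step5
  have h := (((hasDerivAt_id y).sub ((hasDerivAt_pow 3 y).div_const 6)).add
    ((hasDerivAt_pow 5 y).div_const 120)).sub (Real.hasDerivAt_sin y)
  refine h.congr_deriv ?_; push_cast; ring

private lemma step7 : ∀ x : ℝ,
    0 ≤ x → 0 ≤ Real.cos x - 1 + x ^ 2 / 2 - x ^ 4 / 24 + x ^ 6 / 720 := by
  refine nonneg_aux _ (fun y => y - y ^ 3 / 6 + y ^ 5 / 120 - Real.sin y) (fun y => ?_)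
    (by norm_num) step6
  have h := ((((Real.hasDerivAt_cos y).sub_const 1).add ((hasDerivAt_pow 2 y).div_const 2)).sub
    ((hasDerivAt_pow 4 y).div_const 24)).add ((hasDerivAt_pow 6 y).div_const 720)
  refine h.congr_deriv ?_; push_cast; ring

private lemma step8 : ∀ x : ℝ,
    0 ≤ x → 0 ≤ Real.sin x - x + x ^ 3 / 6 - x ^ 5 / 120 + x ^ 7 / 5040 := by
  refine nonneg_aux _ (fun y => Real.cos y - 1 + y ^ 2 / 2 - y ^ 4 / 24 + y ^ 6 / 720)
    (fun y => ?_) (by norm_num) step7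
  have h := ((((Real.hasDerivAt_sin y).sub (hasDerivAt_id y)).add
    ((hasDerivAt_pow 3 y).div_const 6)).sub ((hasDerivAt_pow 5 y).div_const 120)).add
    ((hasDerivAt_pow 7 y).div_const 5040)
  refine h.congr_deriv ?_; push_cast; ring

private lemma step9 : ∀ x : ℝ,
    0 ≤ x → 0 ≤ 1 - x ^ 2 / 2 + x ^ 4 / 24 - x ^ 6 / 720 + x ^ 8 / 40320 - Real.cos x := by
  refine nonneg_aux _
    (fun y => Real.sin y - y + y ^ 3 / 6 - y ^ 5 / 120 + y ^ 7 / 5040) (fun y => ?_)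
    (by norm_num) step8
  have h := (((((hasDerivAt_const y (1:ℝ)).sub ((hasDerivAt_pow 2 y).div_const 2)).add
    ((hasDerivAt_pow 4 y).div_const 24)).sub ((hasDerivAt_pow 6 y).div_const 720)).add
    ((hasDerivAt_pow 8 y).div_const 40320)).sub (Real.hasDerivAt_cos y)
  refine h.congr_deriv ?_; push_cast; ring

private lemma main_pos (y : ℝ) (hy : 0 < y) (hyπ : y < π) :
    ((π ^ 2 - y ^ 2) / π ^ 2) ^ (π ^ 2 / 6) ≤
      3 * (Real.sin y / y ^ 3 - Real.cos y / y ^ 2) := by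
  have hπ : 0 < π := Real.pi_pos
  have hπ3 : (3:ℝ) < π := Real.pi_gt_three
  have hπ10 : π ^ 2 < 9.9225 := by nlinarith [Real.pi_lt_d2]
  have hy2 : y ^ 2 < π ^ 2 := by nlinarith
  have ha0 : 0 < (π ^ 2 - y ^ 2) / π ^ 2 := div_pos (by nlinarith) (by positivity)
  have ha1 : (π ^ 2 - y ^ 2) / π ^ 2 ≤ 1 := by
    rw [div_le_one (by positivity)]; nlinarith
  have h1 : ((π ^ 2 - y ^ 2) / π ^ 2) ^ (π ^ 2 / 6) ≤
      ((π ^ 2 - y ^ 2) / π ^ 2) ^ (1:ℝ) :=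
    Real.rpow_le_rpow_of_exponent_ge ha0 ha1 (by nlinarith)
  rw [Real.rpow_one] at h1
  refine h1.trans ?_
  have h3 : Real.sin y / y ^ 3 - Real.cos y / y ^ 2 = (Real.sin y - y * Real.cos y) / y ^ 3 := by
    field_simp
  rw [h3, mul_div_assoc', le_div_iff₀ (by positivity), div_mul_eq_mul_div,
    div_le_iff₀ (by positivity : (0:ℝ) < π ^ 2)]
  have hs := step8 y hy.le
  have hc := step9 y hy.le
  nlinarith [mul_le_mul_of_nonneg_left hc (by positivity : (0:ℝ) ≤ 3 * y * π ^ 2),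
    mul_le_mul_of_nonneg_left hs (by positivity : (0:ℝ) ≤ 3 * π ^ 2),
    mul_pos (pow_pos hy 5) (by nlinarith : (0:ℝ) < 9.9225 - π ^ 2),
    mul_nonneg (mul_nonneg (pow_nonneg hy.le 7) (by nlinarith : (0:ℝ) ≤ 48 - y ^ 2))
      (sq_nonneg π), pow_pos hy 5]

theorem stmt_3 (x : ℝ) (h0 : 0 < |x|) (h1 : |x| < π) :
    ((π ^ 2 - x ^ 2) / π ^ 2) ^ (π ^ 2 / 6) ≤
      3 * (Real.sin x / x ^ 3 - Real.cos x / x ^ 2) := by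
  rcases lt_or_gt_of_ne (fun h : x = 0 => by simp [h] at h0) with hx | hx
  · have h := main_pos (-x) (by linarith) (by rwa [abs_of_neg hx] at h1)
    have e1 : Real.sin (-x) / (-x) ^ 3 = Real.sin x / x ^ 3 := by
      rw [Real.sin_neg, show (-x) ^ 3 = -(x ^ 3) by ring, neg_div_neg_eq]
    rw [e1, Real.cos_neg, neg_sq] at h; exact h
  · exact main_pos x hx (by rwa [abs_of_pos hx] at h1)
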